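/- Let K be a field, f, g ∈ K[x] of degrees m and n respectively, and 0 ≤ d < min(m,n). Assume the d-th principal subresultant PSres_d(f,g) is nonzero. If F, G ∈ K[x] satisfy deg F < n-d, deg G < m-d, and h = F·f + G·g is a nonzero polynomial of degree at most d, then there exists a nonzero λ ∈ K with h = λ·Sres_d(f,g). -/

import Mathlib

open Polynomial Finset

noncomputable section

/-- The Sylvester-type matrix defining the order-`d` subresultant of `f` and `g`
(of respective degrees `m` and `n`): an `(m+n-2d) × (m+n-2d)` matrix over `K[x]`
whose first `n-d` rows carry the coefficients of `f` (and `x^(n-d-1-i)·f` in the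
last column) and whose last `m-d` rows carry the coefficients of `g`
(and `x^(m-d-1-i)·g` in the last column). -/
def sresMatrix {K : Type*} [Field K] (m n d : ℕ) (f g : K[X]) :
    Matrix (Fin (m + n - 2 * d)) (Fin (m + n - 2 * d)) K[X] :=
  Matrix.of fun i j =>
    if (i : ℕ) < n - d then
      if (j : ℕ) = m + n - 2 * d - 1 then X ^ (n - d - 1 - (i : ℕ)) * f
      else if (j : ℕ) ≤ m + (i : ℕ) then C (f.coeff (m + (i : ℕ) - (j : ℕ))) else 0
    else
      if (j : ℕ) = m + n - 2 * d - 1 then X ^ (m - d - 1 - ((i : ℕ) - (n - d))) * g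
      else if (j : ℕ) ≤ n + ((i : ℕ) - (n - d)) then
        C (g.coeff (n + ((i : ℕ) - (n - d)) - (j : ℕ)))
      else 0

/-- The order-`d` polynomial subresultant `Sres_d(f,g)` of `f` and `g`, of respective
degrees `m` and `n`. -/
def Sres {K : Type*} [Field K] (m n d : ℕ) (f g : K[X]) : K[X] :=
  (sresMatrix m n d f g).det

/-- The `d`-th principal subresultant: the coefficient of `x^d` in `Sres_d(f,g)`. -/
def PSres {K : Type*} [Field K] (m n d : ℕ) (f g : K[X]) : K :=
  (Sres m n d f g).coeff d

end

/-- If `PSres_d(f,g) ≠ 0`, then any nonzero combination `F·f + G·g` of degree at most `d`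
with `deg F < n-d` and `deg G < m-d` is a nonzero scalar multiple of `Sres_d(f,g)`. -/
theorem combination_is_multiple_of_sres {K : Type*} [Field K] (m n d : ℕ) (f g : K[X])
    (hf : f.natDegree = m) (hg : g.natDegree = n) (hdm : d < m) (hdn : d < n)
    (hps : PSres m n d f g ≠ 0) (F G : K[X])
    (hF : F.degree < (n - d : ℕ)) (hG : G.degree < (m - d : ℕ))
    (hne : F * f + G * g ≠ 0) (hdeg : (F * f + G * g).degree ≤ (d : ℕ)) :
    ∃ lam : K, lam ≠ 0 ∧ F * f + G * g = C lam * Sres m n d f g := by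
  classical
  have hN2 : 2 ≤ m + n - 2 * d := by omega
  set N := m + n - 2 * d with hNdef
  set L : Fin N := ⟨N - 1, by omega⟩ with hLdef
  have hLval : (L : ℕ) = N - 1 := rfl
  set M := sresMatrix m n d f g with hMdef
  set p : Fin N → K[X] := fun i => M i L with hpdef
  set q : Fin N → ℕ := fun j => if (j : ℕ) = N - 1 then d else m + n - d - 1 - (j : ℕ)
    with hqdef
  set A : Matrix (Fin N) (Fin N) K := Matrix.of fun i j => (p i).coeff (q j) with hAdef
  set v : Fin N → K := fun i =>
    if (i : ℕ) < n - d then F.coeff (n - d - 1 - (i : ℕ))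
    else G.coeff (m - d - 1 - ((i : ℕ) - (n - d))) with hvdef
  -- the last-column polynomials
  have hp1 : ∀ i : Fin N, p i =
      if (i : ℕ) < n - d then X ^ (n - d - 1 - (i : ℕ)) * f
      else X ^ (m - d - 1 - ((i : ℕ) - (n - d))) * g := by
    intro i
    simp only [hpdef, hMdef, sresMatrix, Matrix.of_apply, hLval, if_pos rfl]
    split <;> rfl
  have hf0 : f ≠ 0 := by intro h; rw [h] at hf; simp at hf; omega
  have hg0 : g ≠ 0 := by intro h; rw [h] at hg; simp at hg; omega
  -- degrees of the p i
  have hpdeg : ∀ i : Fin N, (p i).natDegree < m + n - d := by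
    intro i
    rw [hp1 i]
    split_ifs with hi
    · refine lt_of_le_of_lt (natDegree_mul_le) ?_
      rw [natDegree_X_pow, hf]
      omega
    · refine lt_of_le_of_lt (natDegree_mul_le) ?_
      rw [natDegree_X_pow, hg]
      have : (i : ℕ) < N := i.2
      omega
  -- off-last-column entries of M are C of entries of A
  have hMC : ∀ (i j : Fin N), j ≠ L → M i j = C (A i j) := by
    intro i j hj
    have hjv : (j : ℕ) ≠ N - 1 := by
      intro h; exact hj (Fin.ext (by rw [h, hLval]))
    have hjlt : (j : ℕ) < N - 1 := by
      have := j.2; omega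
    have hq : q j = m + n - d - 1 - (j : ℕ) := by simp [hqdef, hjv]
    have hilt : (i : ℕ) < N := i.2
    have hjv' : (j : ℕ) ≠ m + n - 2 * d - 1 := hjv
    rcases lt_or_ge (i : ℕ) (n - d) with hi | hi
    · simp only [hMdef, sresMatrix, Matrix.of_apply, hAdef, hp1 i, hq, if_neg hjv, if_neg hjv', if_pos hi]
      rw [coeff_X_pow_mul']
      by_cases hc : (j : ℕ) ≤ m + (i : ℕ)
      · rw [if_pos hc, if_pos (show n - d - 1 - (i:ℕ) ≤ m + n - d - 1 - (j:ℕ) by omega)]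
        congr 2
        omega
      · rw [if_neg hc, if_neg (show ¬ (n - d - 1 - (i:ℕ) ≤ m + n - d - 1 - (j:ℕ)) by omega)]
        simp
    · have hi2 : (i : ℕ) < N := i.2
      simp only [hMdef, sresMatrix, Matrix.of_apply, hAdef, hp1 i, hq, if_neg hjv, if_neg hjv',
        if_neg (not_lt.mpr hi)]
      rw [coeff_X_pow_mul']
      by_cases hc : (j : ℕ) ≤ n + ((i : ℕ) - (n - d))
      · rw [if_pos hc,
          if_pos (show m - d - 1 - ((i:ℕ) - (n - d)) ≤ m + n - d - 1 - (j:ℕ) by omega)]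
        congr 2
        omega
      · rw [if_neg hc,
          if_neg (show ¬ (m - d - 1 - ((i:ℕ) - (n - d)) ≤ m + n - d - 1 - (j:ℕ)) by omega)]
        simp
  -- M is A mapped by C with last column replaced by p
  have hMupd : M = (A.map (C : K → K[X])).updateCol L p := by
    ext i j
    rw [Matrix.updateCol_apply]
    split_ifs with h
    · rw [h]
    · rw [Matrix.map_apply, ← hMC i j h]
  set col : ℕ → Fin N → K := fun k i => (p i).coeff k with hcoldef
  -- the subresultant as an explicit polynomial with cramer coefficients
  have hcram_map : ∀ w : Fin N → K,
      Matrix.cramer (A.map (C : K → K[X])) ((C : K → K[X]) ∘ w) L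
        = C (Matrix.cramer A w L) := by
    intro w
    rw [Matrix.cramer_apply, Matrix.cramer_apply, ← Matrix.map_updateCol,
      ← RingHom.mapMatrix_apply, ← RingHom.map_det]
  have hSres : Sres m n d f g = ∑ k ∈ range (m + n - d),
      C (Matrix.cramer A (col k) L) * X ^ k := by
    have hpsum : p = ∑ k ∈ range (m + n - d),
        (X ^ k : K[X]) • ((C : K → K[X]) ∘ col k) := by
      funext i
      rw [Finset.sum_apply]
      calc p i = ∑ k ∈ range (m + n - d), monomial k ((p i).coeff k) :=
            as_sum_range' (p i) _ (hpdeg i)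
        _ = _ := by
            refine Finset.sum_congr rfl fun k _ => ?_
            rw [← C_mul_X_pow_eq_monomial, Pi.smul_apply, Function.comp_apply,
              smul_eq_mul, mul_comm]
    have : Sres m n d f g = Matrix.cramer (A.map (C : K → K[X])) p L := by
      rw [Sres, ← hMdef, hMupd, Matrix.cramer_apply]
    rw [this, hpsum, map_sum]
    rw [Finset.sum_apply]
    refine Finset.sum_congr rfl fun k _ => ?_
    rw [LinearMap.map_smul, Pi.smul_apply, hcram_map, smul_eq_mul, mul_comm]
  -- coefficients of Sres
  have hScoeff : ∀ e : ℕ, (Sres m n d f g).coeff e =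
      if e < m + n - d then Matrix.cramer A (col e) L else 0 := by
    intro e
    rw [hSres, finset_sum_coeff]
    simp only [coeff_C_mul, coeff_X_pow, mul_ite, mul_one, mul_zero]
    rw [Finset.sum_ite_eq (range (m + n - d)) e fun k => Matrix.cramer A (col k) L]
    simp [mem_range]
  -- principal subresultant is det A
  have hqL : q L = d := by simp [hqdef, hLval]
  have hcolA : col d = fun i => A i L := by
    funext i; simp [hcoldef, hAdef, hqL]
  have hPS : PSres m n d f g = A.det := by
    rw [PSres, hScoeff d, if_pos (by omega), hcolA, Matrix.cramer_apply,
      Matrix.updateCol_eq_self]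
  -- decomposition of the combination
  have hFdeg : F.natDegree < n - d := by
    rcases eq_or_ne F 0 with h | h
    · rw [h, natDegree_zero]; omega
    · exact (natDegree_lt_iff_degree_lt h).mpr hF
  have hGdeg : G.natDegree < m - d := by
    rcases eq_or_ne G 0 with h | h
    · rw [h, natDegree_zero]; omega
    · exact (natDegree_lt_iff_degree_lt h).mpr hG
  set w : ℕ → K[X] := fun i =>
    if i < n - d then C (F.coeff (n - d - 1 - i)) * (X ^ (n - d - 1 - i) * f)
    else C (G.coeff (m - d - 1 - (i - (n - d)))) * (X ^ (m - d - 1 - (i - (n - d))) * g)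
    with hwdef
  have hsum1 : F * f = ∑ i ∈ range (n - d),
      C (F.coeff (n - d - 1 - i)) * (X ^ (n - d - 1 - i) * f) := by
    calc F * f = (∑ k ∈ range (n - d), monomial k (F.coeff k)) * f := by
          rw [← as_sum_range' F (n - d) hFdeg]
      _ = ∑ k ∈ range (n - d), C (F.coeff k) * (X ^ k * f) := by
          rw [Finset.sum_mul]
          exact Finset.sum_congr rfl fun k _ => by
            rw [← C_mul_X_pow_eq_monomial, mul_assoc]
      _ = _ := (Finset.sum_range_reflect (fun k => C (F.coeff k) * (X ^ k * f)) (n - d)).symm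
  have hsum2 : G * g = ∑ i ∈ range (m - d),
      C (G.coeff (m - d - 1 - i)) * (X ^ (m - d - 1 - i) * g) := by
    calc G * g = (∑ k ∈ range (m - d), monomial k (G.coeff k)) * g := by
          rw [← as_sum_range' G (m - d) hGdeg]
      _ = ∑ k ∈ range (m - d), C (G.coeff k) * (X ^ k * g) := by
          rw [Finset.sum_mul]
          exact Finset.sum_congr rfl fun k _ => by
            rw [← C_mul_X_pow_eq_monomial, mul_assoc]
      _ = _ := (Finset.sum_range_reflect (fun k => C (G.coeff k) * (X ^ k * g)) (m - d)).symm
  have hcomb : F * f + G * g = ∑ i : Fin N, C (v i) * p i := by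
    have h1 : ∀ i : Fin N, C (v i) * p i = w (i : ℕ) := by
      intro i
      rw [hp1 i, hvdef, hwdef]
      dsimp only
      split_ifs with h <;> rfl
    have h2 : ∑ i : Fin N, C (v i) * p i = ∑ i ∈ range N, w i := by
      rw [← Fin.sum_univ_eq_sum_range w N]
      exact Finset.sum_congr rfl fun i _ => h1 i
    rw [h2, show N = (n - d) + (m - d) by omega, Finset.sum_range_add]
    congr 1
    · rw [hsum1]
      refine Finset.sum_congr rfl fun i hi => ?_
      rw [hwdef]
      dsimp only
      rw [if_pos (mem_range.mp hi)]
    · rw [hsum2]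
      refine Finset.sum_congr rfl fun i _ => ?_
      rw [hwdef]
      dsimp only
      rw [if_neg (by omega), show n - d + i - (n - d) = i by omega]
  have hcoeffh : ∀ e : ℕ, (F * f + G * g).coeff e = ∑ i : Fin N, v i * col e i := by
    intro e
    rw [hcomb, finset_sum_coeff]
    exact Finset.sum_congr rfl fun i _ => by rw [coeff_C_mul]
  -- the vector v annihilates all but the last column of A
  have hvA : Matrix.vecMul v A = fun j => if j = L then (F * f + G * g).coeff d else 0 := by
    funext j
    have hvm : Matrix.vecMul v A j = ∑ i : Fin N, v i * A i j := rfl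
    by_cases hj : j = L
    · rw [hvm, if_pos hj, hj, hcoeffh d]
      refine Finset.sum_congr rfl fun i _ => ?_
      rw [hcolA]
    · rw [hvm, if_neg hj]
      have hjv : (j : ℕ) ≠ N - 1 := fun h => hj (Fin.ext (by rw [h, hLval]))
      have hq : q j = m + n - d - 1 - (j : ℕ) := if_neg hjv
      have hjlt : (j : ℕ) < N - 1 := by have := j.2; omega
      have h0 : (F * f + G * g).coeff (m + n - d - 1 - (j : ℕ)) = 0 := by
        apply coeff_eq_zero_of_degree_lt
        refine lt_of_le_of_lt hdeg ?_
        exact_mod_cast (by omega : d < m + n - d - 1 - (j : ℕ))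
      have h2 : ∑ i : Fin N, v i * A i j = (F * f + G * g).coeff (q j) := by
        rw [hcoeffh]
        exact Finset.sum_congr rfl fun i _ => rfl
      rw [h2, hq, h0]
  have hdetA : A.det ≠ 0 := by rw [← hPS]; exact hps
  have hu : IsUnit A.det := Ne.isUnit hdetA
  set α := (F * f + G * g).coeff d with hαdef
  have hv2 : v = fun i => α * A⁻¹ L i := by
    have h1 : Matrix.vecMul (Matrix.vecMul v A) A⁻¹ = v := by
      rw [Matrix.vecMul_vecMul, Matrix.mul_nonsing_inv A hu, Matrix.vecMul_one]
    rw [← h1, hvA]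
    funext i
    have : Matrix.vecMul (fun j => if j = L then α else 0) A⁻¹ i
        = ∑ j : Fin N, (if j = L then α else 0) * A⁻¹ j i := rfl
    rw [this]
    simp [ite_mul, Finset.sum_ite_eq']
  have hmv : ∀ b : Fin N → K, Matrix.cramer A b L = A.det * (Matrix.mulVec A⁻¹ b) L := by
    intro b
    have h1 : Matrix.mulVec A⁻¹ (Matrix.mulVec A (Matrix.cramer A b)) = Matrix.cramer A b := by
      rw [Matrix.mulVec_mulVec, Matrix.nonsing_inv_mul A hu, Matrix.one_mulVec]
    rw [← h1, Matrix.mulVec_cramer, Matrix.mulVec_smul]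
    simp
  have key : ∀ e : ℕ, A.det * (F * f + G * g).coeff e
      = α * (Sres m n d f g).coeff e := by
    intro e
    by_cases he : e < m + n - d
    · rw [hcoeffh e, hScoeff e, if_pos he, hmv]
      rw [hv2]
      have hAb : (Matrix.mulVec A⁻¹ (col e)) L = ∑ i : Fin N, A⁻¹ L i * col e i := rfl
      rw [hAb, Finset.mul_sum, Finset.mul_sum, Finset.mul_sum]
      exact Finset.sum_congr rfl fun i _ => by ring
    · rw [hScoeff e, if_neg he, mul_zero, coeff_eq_zero_of_degree_lt, mul_zero]
      exact lt_of_le_of_lt hdeg (by exact_mod_cast (by omega : d < e))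
  have heq : F * f + G * g = C (α * A.det⁻¹) * Sres m n d f g := by
    ext e
    rw [coeff_C_mul]
    have h2 := key e
    have h3 : (F * f + G * g).coeff e = A.det⁻¹ * (A.det * (F * f + G * g).coeff e) := by
      rw [← mul_assoc, inv_mul_cancel₀ hdetA, one_mul]
    rw [h3, h2]
    ring
  refine ⟨α * A.det⁻¹, fun h0 => hne ?_, heq⟩
  rw [heq, h0, map_zero, zero_mul]
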